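/- Let q be a prime power and m a positive integer. Let a_1, …, a_ℓ ∈ F_{q^m} be nonzero and pairwise non-conjugate in F_{q^m} with respect to σ(x) = x^q, and for each i = 1,…,ℓ let β_{i,1}, …, β_{i,η_i} ∈ F_{q^m} be nonzero elements, with η_i ≥ 1. Set h = N = η_1 + η_2 + ⋯ + η_ℓ. Let V ∈ F_{q^m}^{h×N} be the matrix whose entry in row u (for u = 0, 1, …, h−1) and in the column indexed by (i,j) is N_u(β_{i,j}^{q−1}·a_i). For each i, let V_i ∈ F_{q^m}^{h×η_i} be the submatrix of V consisting of the columns indexed by (i,1), …, (i,η_i). Then rank(V) = rank(V_1) + rank(V_2) + ⋯ + rank(V_ℓ). -/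

import Mathlib

open Finset

namespace RSRaux


/-- `N_u(a) * b^(q^u)` as a function of `u : ℕ`. -/
def Wnat (q : ℕ) {K : Type} [Field K] (a b : K) (u : ℕ) : K :=
  a ^ ((q ^ u - 1) / (q - 1)) * b ^ q ^ u

lemma exp_succ {q : ℕ} (hq2 : 2 ≤ q) (u : ℕ) :
    (q ^ (u + 1) - 1) / (q - 1) = (q ^ u - 1) / (q - 1) + q ^ u := by
  have hA : 1 ≤ q ^ u := Nat.one_le_pow _ _ (by omega)
  have hle : q ^ u ≤ q ^ (u + 1) := Nat.pow_le_pow_right (by omega) (by omega)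
  have hmul : q ^ u * (q - 1) = q ^ (u + 1) - q ^ u := by
    rw [Nat.mul_sub, mul_one, pow_succ]
  have h1 : q ^ (u + 1) - 1 = (q ^ u - 1) + q ^ u * (q - 1) := by
    rw [hmul]; omega
  rw [h1, Nat.add_mul_div_right _ _ (show 0 < q - 1 by omega)]

variable {K : Type} [Field K] {q : ℕ}

lemma frob_pow (hfrob : ∀ x y : K, (x + y) ^ q = x ^ q + y ^ q) (u : ℕ) (x y : K) :
    (x + y) ^ q ^ u = x ^ q ^ u + y ^ q ^ u := by
  induction u with
  | zero => simp
  | succ u ih => rw [pow_succ, pow_mul, pow_mul, pow_mul, ih, hfrob]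

lemma sum_pow_frob (hq2 : 2 ≤ q) (hfrob : ∀ x y : K, (x + y) ^ q = x ^ q + y ^ q)
    {ι : Type*} (s : Finset ι) (f : ι → K) :
    (∑ x ∈ s, f x) ^ q = ∑ x ∈ s, f x ^ q := by
  induction s using Finset.cons_induction with
  | empty => simp [zero_pow (show q ≠ 0 by omega)]
  | cons a s ha ih => rw [Finset.sum_cons, Finset.sum_cons, hfrob, ih]

lemma neg_one_pow_frob (hq2 : 2 ≤ q) (hfrob : ∀ x y : K, (x + y) ^ q = x ^ q + y ^ q) :
    (-1 : K) ^ q = -1 := by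
  have h := hfrob 1 (-1)
  simp only [add_neg_cancel, zero_pow (show q ≠ 0 by omega), one_pow] at h
  linear_combination -h

lemma Wstep (hq2 : 2 ≤ q) (hfrob : ∀ x y : K, (x + y) ^ q = x ^ q + y ^ q)
    (a b g₁ : K) (u : ℕ) :
    Wnat q a b u + g₁ ^ q ^ u * Wnat q a b (u + 1) = Wnat q a (b + g₁ * a * b ^ q) u := by
  unfold Wnat
  rw [frob_pow hfrob, exp_succ hq2, pow_add, mul_pow, mul_pow, ← pow_mul,
    show q * q ^ u = q ^ (u + 1) by rw [pow_succ]; ring]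
  ring


/-- kernel-of-c lemma packaged. -/

lemma kerc (hq2 : 2 ≤ q) {a₀ β₀ : K} (ha₀ : a₀ ≠ 0) (hβ₀ : β₀ ≠ 0)
    {a b : K} (ha : a ≠ 0) (hb : b ≠ 0)
    (h : b + (-(β₀ / (a₀ * β₀ ^ q))) * a * b ^ q = 0) :
    b / β₀ ≠ 0 ∧ a₀ = (b / β₀) ^ (q - 1) * a := by
  have hβ₀q : β₀ ^ q ≠ 0 := pow_ne_zero _ hβ₀
  have hc : b / β₀ ≠ 0 := div_ne_zero hb hβ₀
  refine ⟨hc, ?_⟩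
  have hq1 : q - 1 + 1 = q := by omega
  have hbq : b ^ q = b ^ (q - 1) * b := by rw [← pow_succ, hq1]
  have hβq : β₀ ^ q = β₀ ^ (q - 1) * β₀ := by rw [← pow_succ, hq1]
  have h1 : a₀ * β₀ ^ q * b = β₀ * (a * b ^ q) := by
    field_simp at h
    linear_combination h
  have h2 : (a₀ * β₀ ^ (q - 1)) * (β₀ * b) = (b ^ (q - 1) * a) * (β₀ * b) := by
    calc (a₀ * β₀ ^ (q - 1)) * (β₀ * b) = a₀ * β₀ ^ q * b := by rw [hβq]; ring
      _ = β₀ * (a * b ^ q) := h1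
      _ = (b ^ (q - 1) * a) * (β₀ * b) := by rw [hbq]; ring
  have h3 : a₀ * β₀ ^ (q - 1) = b ^ (q - 1) * a :=
    mul_right_cancel₀ (mul_ne_zero hβ₀ hb) h2
  rw [div_pow]
  field_simp
  linear_combination h3

lemma core [DecidableEq K] (hq2 : 2 ≤ q) (hfrob : ∀ x y : K, (x + y) ^ q = x ^ q + y ^ q) :
    ∀ (n : ℕ) (ι : Type) [Fintype ι] [DecidableEq ι] (A B g : ι → K),
    (∀ x, A x ≠ 0) → (∀ x, B x ≠ 0) →
    (∀ x y, A x ≠ A y → ∀ c : K, c ≠ 0 → A y ≠ c ^ (q - 1) * A x) →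
    (∀ lam : ι → K, (∀ x, lam x ^ q = lam x) →
      ∀ x₀, ∑ x ∈ Finset.univ.filter (fun x => A x = A x₀), lam x * B x = 0 → lam x₀ = 0) →
    Fintype.card ι ≤ n →
    (∀ u, u < n → ∑ x, g x * Wnat q (A x) (B x) u = 0) →
    ∀ x, g x = 0 := by
  have hq0 : q ≠ 0 := by omega
  intro n
  induction n with
  | zero =>
    intro ι _ _ A B g _ _ _ _ hcard _ x
    exact absurd (Fintype.card_pos_iff.mpr ⟨x⟩) (by omega)
  | succ n IH =>
    intro ι _ _ A B g hA0 hB0 hAc hBind hcard Hsum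
    rcases isEmpty_or_nonempty ι with hempty | hne
    · intro x; exact (hempty.false x).elim
    obtain ⟨x₀⟩ := hne
    set a₀ := A x₀ with ha₀def
    set β₀ := B x₀ with hβ₀def
    have ha₀ : a₀ ≠ 0 := hA0 x₀
    have hβ₀ : β₀ ≠ 0 := hB0 x₀
    set g₁ : K := -(β₀ / (a₀ * β₀ ^ q)) with hg₁
    set B' : ι → K := fun x => B x + g₁ * A x * B x ^ q with hB'def
    -- splitting sums at x₀
    have sum_split : ∀ G : ι → K, ∑ y, G y = G x₀ + ∑ x : {x : ι // x ≠ x₀}, G x.val := by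
      intro G
      rw [← Finset.sum_erase_add _ _ (Finset.mem_univ x₀), add_comm]
      congr 1
      rw [Finset.sum_subtype (p := fun x => x ≠ x₀) (Finset.univ.erase x₀)
        (fun x => by simp) G]
    have fiber_split : ∀ (f : ι → K) (v : K),
        ∑ y ∈ Finset.univ.filter (fun y => A y = v), f y
          = (if A x₀ = v then f x₀ else 0)
            + ∑ x ∈ Finset.univ.filter (fun x : {x : ι // x ≠ x₀} => A x.val = v),
                f x.val := by
      intro f v
      rw [Finset.sum_filter, Finset.sum_filter, sum_split fun y => if A y = v then f y else 0]
    -- the new parameter at x₀ is 0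
    have hB'x₀ : B' x₀ = 0 := by
      have hβ₀q : β₀ ^ q ≠ 0 := pow_ne_zero _ hβ₀
      simp only [hB'def, hg₁, ← ha₀def, ← hβ₀def]
      field_simp
      ring
    -- nonvanishing of new parameters off x₀
    have hB0' : ∀ x : {x : ι // x ≠ x₀}, B' x.val ≠ 0 := by
      rintro ⟨x, hx⟩ hzero
      simp only [hB'def, hg₁] at hzero
      obtain ⟨hc, hconj⟩ := kerc hq2 ha₀ hβ₀ (hA0 x) (hB0 x) hzero
      by_cases hsame : A x = a₀
      · rw [hsame] at hconj
        have hc1 : (B x / β₀) ^ (q - 1) = 1 := by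
          have h' : (1 : K) * a₀ = (B x / β₀) ^ (q - 1) * a₀ := by linear_combination hconj
          exact (mul_right_cancel₀ ha₀ h').symm
        set c := B x / β₀ with hcdef
        have hcq : c ^ q = c := by
          rw [show q = q - 1 + 1 by omega, pow_succ, hc1, one_mul]
        set lam : ι → K := fun y => if y = x₀ then c else if y = x then -1 else 0 with hlam
        have hlamq : ∀ y, lam y ^ q = lam y := by
          intro y
          simp only [hlam]
          split
          · exact hcq
          · split
            · exact neg_one_pow_frob hq2 hfrob
            · exact zero_pow hq0
        have hsum0 : ∑ y ∈ Finset.univ.filter (fun y => A y = A x₀), lam y * B y = 0 := by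
          have hterm : ∀ y, lam y * B y
              = (if y = x₀ then c * β₀ else 0) + (if y = x then -(B x) else 0) := by
            intro y
            simp only [hlam]
            by_cases h1 : y = x₀
            · subst h1; rw [if_pos rfl, if_pos rfl, if_neg (Ne.symm hx)]; ring
            · by_cases h2 : y = x
              · subst h2; rw [if_neg h1, if_pos rfl, if_neg h1, if_pos rfl]; ring
              · rw [if_neg h1, if_neg h2, if_neg h1, if_neg h2]; ring
          rw [Finset.sum_congr rfl fun y _ => hterm y, Finset.sum_add_distrib,
            Finset.sum_ite_eq' _ x₀ (fun _ => c * β₀),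
            Finset.sum_ite_eq' _ x (fun _ => -(B x))]
          rw [if_pos (by simp), if_pos (by simp [hsame, ha₀def])]
          rw [hcdef, div_mul_cancel₀ _ hβ₀]
          ring
        have hl0 := hBind lam hlamq x₀ hsum0
        have hlx : lam x₀ = c := if_pos rfl
        exact hc (hlx.symm.trans hl0)
      · exact hAc x x₀ hsame _ hc hconj
    -- per-class independence for the restricted family
    have hBind' : ∀ lam : {x : ι // x ≠ x₀} → K, (∀ x, lam x ^ q = lam x) →
        ∀ xb : {x : ι // x ≠ x₀},
          ∑ x ∈ Finset.univ.filter (fun x : {x : ι // x ≠ x₀} => A x.val = A xb.val),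
            lam x * B' x.val = 0 → lam xb = 0 := by
      intro lam hlamq xb hsum
      set av := A xb.val with hav
      set S := ∑ x ∈ Finset.univ.filter (fun x : {x : ι // x ≠ x₀} => A x.val = av),
        lam x * B x.val with hS
      have hsum2 : S + g₁ * av * S ^ q = 0 := by
        rw [hS, sum_pow_frob hq2 hfrob, Finset.mul_sum, ← Finset.sum_add_distrib, ← hsum]
        apply Finset.sum_congr rfl
        intro x hx
        have hAx : A x.val = av := by simpa using hx
        simp only [hB'def, hAx]
        rw [mul_pow, hlamq x]
        ring
      obtain ⟨c, hcq, hSc⟩ : ∃ c : K, c ^ q = c ∧ S = c * β₀ := by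
        by_cases hava : av = a₀
        · by_cases hS0 : S = 0
          · exact ⟨0, zero_pow hq0, by rw [hS0, zero_mul]⟩
          · rw [hg₁] at hsum2
            obtain ⟨hc, hconj⟩ := kerc hq2 ha₀ hβ₀ (by rw [hava]; exact ha₀) hS0 hsum2
            rw [hava] at hconj
            have hc1 : (S / β₀) ^ (q - 1) = 1 :=
              (mul_right_cancel₀ ha₀ (show (1 : K) * a₀ = (S / β₀) ^ (q - 1) * a₀ by
                linear_combination hconj)).symm
            refine ⟨S / β₀, ?_, (div_mul_cancel₀ _ hβ₀).symm⟩
            rw [show q = q - 1 + 1 by omega, pow_succ, hc1, one_mul]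
        · have hS0 : S = 0 := by
            by_contra hS0
            rw [hg₁] at hsum2
            obtain ⟨hc, hconj⟩ := kerc hq2 ha₀ hβ₀ (hA0 xb.val) hS0 hsum2
            exact hAc xb.val x₀ hava _ hc hconj
          exact ⟨0, zero_pow hq0, by rw [hS0, zero_mul]⟩
      set lam' : ι → K := fun y => if h : y = x₀ then -c else lam ⟨y, h⟩ with hlam'
      have hlamq' : ∀ y, lam' y ^ q = lam' y := by
        intro y
        simp only [hlam']
        split
        · rw [show (-c) = (-1) * c by ring, mul_pow, neg_one_pow_frob hq2 hfrob, hcq]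
        · exact hlamq _
      have hfib : ∑ y ∈ Finset.univ.filter (fun y => A y = A xb.val), lam' y * B y = 0 := by
        rw [fiber_split (fun y => lam' y * B y) (A xb.val)]
        have hrestr : ∑ x ∈ Finset.univ.filter
            (fun x : {x : ι // x ≠ x₀} => A x.val = A xb.val), lam' x.val * B x.val = S := by
          rw [hS]
          apply Finset.sum_congr rfl
          intro x hx
          simp only [hlam', dif_neg x.2]
        rw [hrestr]
        by_cases hx₀fib : A x₀ = A xb.val
        · rw [if_pos hx₀fib]
          simp only [hlam', dif_pos rfl]
          rw [hSc, ← hβ₀def]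
          ring
        · rw [if_neg hx₀fib]
          have hava : av ≠ a₀ := fun h => hx₀fib h.symm
          -- rederive S = 0
          have hS0 : S = 0 := by
            by_contra hS0
            rw [hg₁] at hsum2
            obtain ⟨hc, hconj⟩ := kerc hq2 ha₀ hβ₀ (hA0 xb.val) hS0 hsum2
            exact hAc xb.val x₀ hava _ hc hconj
          rw [hS0, zero_add]
      have hl0 := hBind lam' hlamq' xb.val hfib
      have hlx : lam' xb.val = lam xb := by
        have : lam' xb.val = dite (xb.val = x₀) (fun _ => -c) (fun h => lam ⟨xb.val, h⟩) := rfl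
        rw [this, dif_neg xb.2]
      rw [← hlx, hl0]
    -- transformed sums
    have H' : ∀ u, u < n → ∑ x : {x : ι // x ≠ x₀},
        g x.val * Wnat q (A x.val) (B' x.val) u = 0 := by
      intro u hu
      have e1 := Hsum u (by omega)
      have e2 := Hsum (u + 1) (by omega)
      have hall : ∑ x : ι, g x * Wnat q (A x) (B' x) u = 0 := by
        calc ∑ x : ι, g x * Wnat q (A x) (B' x) u
            = ∑ x : ι, (g x * Wnat q (A x) (B x) u
                + g₁ ^ q ^ u * (g x * Wnat q (A x) (B x) (u + 1))) := by
              apply Finset.sum_congr rfl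
              intro x _
              rw [← Wstep hq2 hfrob (A x) (B x) g₁ u]
              ring
          _ = 0 := by
              rw [Finset.sum_add_distrib, ← Finset.mul_sum, e1, e2]; ring
      rw [sum_split (fun x => g x * Wnat q (A x) (B' x) u)] at hall
      rw [hB'x₀] at hall
      simpa only [Wnat, zero_pow (pow_ne_zero u hq0), mul_zero, zero_add] using hall
    -- cardinality
    have hcard' : Fintype.card {x : ι // x ≠ x₀} ≤ n := by
      have h1 : Fintype.card {x : ι // x ≠ x₀}
          = Fintype.card ι - Fintype.card {x : ι // x = x₀} :=
        Fintype.card_subtype_compl _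
      rw [h1, Fintype.card_subtype_eq] at *
      omega
    have hrest := IH {x : ι // x ≠ x₀} (fun x => A x.val) (fun x => B' x.val)
      (fun x => g x.val) (fun x => hA0 x.val) hB0'
      (fun x y hxy c hc => hAc x.val y.val hxy c hc) hBind' hcard' H'
    -- conclude
    have hgx₀ : g x₀ = 0 := by
      have h0 := Hsum 0 (by omega)
      rw [sum_split (fun x => g x * Wnat q (A x) (B x) 0)] at h0
      have hz : ∑ x : {x : ι // x ≠ x₀}, g x.val * Wnat q (A x.val) (B x.val) 0 = 0 := by
        apply Finset.sum_eq_zero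
        intro x _
        exact mul_eq_zero_of_left (hrest x) _
      rw [hz, add_zero] at h0
      have hW0 : Wnat q a₀ β₀ 0 = β₀ := by
        simp [Wnat]
      rw [← ha₀def, ← hβ₀def, hW0] at h0
      exact (mul_eq_zero.mp h0).resolve_right hβ₀
    intro x
    by_cases hx : x = x₀
    · rw [hx]; exact hgx₀
    · exact hrest ⟨x, hx⟩




-- general span lemmas
lemma span_smul_eq {K M : Type*} [Field K] [AddCommGroup M] [Module K M] {ι : Type*}
    (v : ι → M) (d : ι → K) (hd : ∀ i, d i ≠ 0) :
    Submodule.span K (Set.range fun i => d i • v i) = Submodule.span K (Set.range v) := by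
  apply le_antisymm <;> rw [Submodule.span_le] <;> rintro x ⟨i, rfl⟩
  · exact Submodule.smul_mem _ _ (Submodule.subset_span ⟨i, rfl⟩)
  · have h : v i = (d i)⁻¹ • (d i • v i) := by
      rw [smul_smul, inv_mul_cancel₀ (hd i), one_smul]
    rw [h]
    exact Submodule.smul_mem _ _ (Submodule.subset_span ⟨i, rfl⟩)

lemma span_image_eq {Fq K M : Type*} [Field Fq] [Field K] [AddCommGroup M]
    [Module Fq M] [Module K M] [Algebra Fq K] [IsScalarTower Fq K M]
    (φ : K →ₗ[Fq] M) {s t : Set K} (h : Submodule.span Fq s = Submodule.span Fq t) :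
    Submodule.span K (φ '' s) = Submodule.span K (φ '' t) := by
  have key : ∀ s t : Set K, Submodule.span Fq s ≤ Submodule.span Fq t →
      Submodule.span K (φ '' s) ≤ Submodule.span K (φ '' t) := by
    intro s t hst
    rw [Submodule.span_le]
    rintro x ⟨b, hb, rfl⟩
    have hb' : b ∈ Submodule.span Fq t := hst (Submodule.subset_span hb)
    have hmem : φ b ∈ Submodule.map φ (Submodule.span Fq t) :=
      Submodule.mem_map_of_mem hb'
    rw [Submodule.map_span] at hmem
    exact Submodule.span_le_restrictScalars Fq K (φ '' t) hmem
  exact le_antisymm (key _ _ h.le) (key _ _ h.ge)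

lemma fixed_mem {Fq K : Type} [Field Fq] [Field K] [Fintype Fq] [Algebra Fq K]
    {q : ℕ} (hq2 : 2 ≤ q) (hcard : Fintype.card Fq = q) (x : K) (hx : x ^ q = x) :
    ∃ l : Fq, algebraMap Fq K l = x := by
  classical
  by_contra hcon
  push_neg at hcon
  set P : Polynomial K := Polynomial.X ^ q - Polynomial.X with hP
  have hPne : P ≠ 0 := by
    intro h
    have h2 : P.coeff q = 0 := by rw [h]; simp
    rw [hP] at h2
    simp only [Polynomial.coeff_sub, Polynomial.coeff_X_pow, if_pos rfl,
      Polynomial.coeff_X, if_neg (show ¬(1 = q) by omega)] at h2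
    simp at h2
  have hroot : ∀ y : K, y ^ q = y → y ∈ P.roots := by
    intro y hy
    rw [Polynomial.mem_roots hPne]
    simp [Polynomial.IsRoot, hP, hy]
  set T : Finset K := insert x (Finset.univ.image (algebraMap Fq K)) with hT
  have hxni : x ∉ Finset.univ.image (algebraMap Fq K) := by
    intro hmem
    obtain ⟨l, -, hl⟩ := Finset.mem_image.mp hmem
    exact hcon l hl
  have hTcard : T.card = q + 1 := by
    rw [hT, Finset.card_insert_of_notMem hxni,
      Finset.card_image_of_injective _ (algebraMap Fq K).injective,
      Finset.card_univ, hcard]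
  have hsub : T ⊆ P.roots.toFinset := by
    intro y hy
    rw [Multiset.mem_toFinset]
    rcases Finset.mem_insert.mp hy with h | h
    · exact h ▸ hroot x hx
    · obtain ⟨l, _, rfl⟩ := Finset.mem_image.mp h
      apply hroot
      rw [← map_pow]
      congr 1
      rw [← hcard]
      exact FiniteField.pow_card l
  have hdeg : P.natDegree = q := by
    rw [hP]
    rw [Polynomial.natDegree_sub_eq_left_of_natDegree_lt]
    · exact Polynomial.natDegree_X_pow q
    · rw [Polynomial.natDegree_X, Polynomial.natDegree_X_pow]; omega
  have hle : q + 1 ≤ q := by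
    calc q + 1 = T.card := hTcard.symm
      _ ≤ P.roots.toFinset.card := Finset.card_le_card hsub
      _ ≤ Multiset.card P.roots := Multiset.toFinset_card_le _
      _ ≤ P.natDegree := P.card_roots'
      _ = q := hdeg
  omega

lemma fixed_pow_pow {K : Type} [Field K] {q : ℕ} {x : K} (hx : x ^ q = x) (u : ℕ) :
    x ^ q ^ u = x := by
  induction u with
  | zero => simp
  | succ u ih => rw [pow_succ, pow_mul, ih, hx]


end RSRaux

/-- For pairwise non-conjugate `a_i` and nonzero `β_{i,j}`, the rank of the
square matrix with entries `N_u(β_{i,j}^{q-1}·a_i)` equals the sum of the ranks of its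
blocks of columns. -/
theorem rank_eq_sum_rank_blocks
    (q m ℓ : ℕ) (hq : IsPrimePow q) (hm : 0 < m) (hℓ : 0 < ℓ)
    (Fq K : Type) [Field Fq] [Field K] [Fintype Fq] [Fintype K] [Algebra Fq K]
    (hcardFq : Fintype.card Fq = q) (hcardK : Fintype.card K = q ^ m)
    (a : Fin ℓ → K) (ha : ∀ i, a i ≠ 0)
    (hconj : ∀ i i' : Fin ℓ, i ≠ i' →
      ¬ ∃ c : K, c ≠ 0 ∧ a i' = c ^ (q - 1) * a i)
    (η : Fin ℓ → ℕ) (hη : ∀ i, 1 ≤ η i)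
    (β : (i : Fin ℓ) → Fin (η i) → K) (hβ : ∀ i j, β i j ≠ 0)
    (N : ℕ) (hN : N = ∑ i, η i)
    (V : Matrix (Fin N) ((i : Fin ℓ) × Fin (η i)) K)
    (hV : ∀ (u : Fin N) (c : (i : Fin ℓ) × Fin (η i)),
      V u c = (β c.1 c.2 ^ (q - 1) * a c.1) ^ ((q ^ (u : ℕ) - 1) / (q - 1))) :
    V.rank = ∑ i : Fin ℓ,
      (V.submatrix id (fun j : Fin (η i) =>
        (⟨i, j⟩ : (i : Fin ℓ) × Fin (η i)))).rank := by
  classical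
  have hq2 : 2 ≤ q := hq.two_le
  have hq0 : q ≠ 0 := by omega
  -- characteristic and Frobenius
  obtain ⟨p, e, hp, he, hpe⟩ := hq
  have hpprime : p.Prime := Nat.prime_iff.mpr hp
  have hrchar : CharP K (ringChar K) := ringChar.charP K
  have hrprime : (ringChar K).Prime := CharP.char_is_prime K (ringChar K)
  obtain ⟨nn, -, hncard⟩ := FiniteField.card K (ringChar K)
  have hpm : (ringChar K) ^ (nn : ℕ) = p ^ (e * m) := by
    rw [← hncard, hcardK, ← hpe, ← pow_mul]
  have hpr : p = ringChar K := by
    have hdvd : p ∣ (ringChar K) ^ (nn : ℕ) := by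
      rw [hpm]
      exact dvd_pow_self p (by positivity)
    exact (Nat.prime_dvd_prime_iff_eq hpprime hrprime).mp (hpprime.dvd_of_dvd_pow hdvd)
  haveI : CharP K p := hpr ▸ ringChar.charP K
  haveI : Fact p.Prime := ⟨hpprime⟩
  have hfrob : ∀ x y : K, (x + y) ^ q = x ^ q + y ^ q := by
    intro x y
    rw [← hpe]
    exact add_pow_char_pow x y p e
  -- scalars of Fq are fixed by x ↦ x^q
  have halgfix : ∀ l : Fq, (algebraMap Fq K l) ^ q = algebraMap Fq K l := by
    intro l
    rw [← map_pow]
    congr 1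
    rw [← hcardFq]
    exact FiniteField.pow_card l
  -- the Fq-linear maps β ↦ (N_u(a_i) β^{q^u})_u
  have hWadd : ∀ (i : Fin ℓ) (b₁ b₂ : K),
      (fun u : Fin N => RSRaux.Wnat q (a i) (b₁ + b₂) (u : ℕ))
        = (fun u : Fin N => RSRaux.Wnat q (a i) b₁ (u : ℕ))
          + (fun u : Fin N => RSRaux.Wnat q (a i) b₂ (u : ℕ)) := by
    intro i b₁ b₂
    funext u
    simp only [RSRaux.Wnat, Pi.add_apply, RSRaux.frob_pow hfrob]
    ring
  have hWsmul : ∀ (i : Fin ℓ) (l : Fq) (b : K),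
      (fun u : Fin N => RSRaux.Wnat q (a i) (l • b) (u : ℕ))
        = l • (fun u : Fin N => RSRaux.Wnat q (a i) b (u : ℕ)) := by
    intro i l b
    funext u
    simp only [RSRaux.Wnat, Pi.smul_apply, Algebra.smul_def]
    rw [mul_pow, RSRaux.fixed_pow_pow (halgfix l)]
    ring
  let Φ : (i : Fin ℓ) → (K →ₗ[Fq] (Fin N → K)) := fun i =>
    { toFun := fun b => fun u : Fin N => RSRaux.Wnat q (a i) b (u : ℕ)
      map_add' := hWadd i
      map_smul' := hWsmul i }
  -- bases of the Fq-spans of the β's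
  have hex : ∀ i : Fin ℓ, ∃ t : Set K, t ⊆ Set.range (β i) ∧
      Submodule.span Fq t = Submodule.span Fq (Set.range (β i)) ∧
      LinearIndependent Fq ((↑) : t → K) := fun i => exists_linearIndependent Fq _
  choose t htsub htspan htind using hex
  haveI htfin : ∀ i, Fintype (t i) :=
    fun i => (Set.Finite.subset (Set.finite_range (β i)) (htsub i)).fintype
  -- the combined family
  let F : ((i : Fin ℓ) × t i) → (Fin N → K) := fun x => Φ x.1 x.2
  -- injectivity of a
  have hainj : Function.Injective a := by
    intro i i' h
    by_contra hne
    exact hconj i i' hne ⟨1, one_ne_zero, by rw [one_pow, one_mul, h]⟩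
  -- the combined family is K-linearly independent
  have hFind : LinearIndependent K F := by
    rw [Fintype.linearIndependent_iff]
    intro g hg
    apply RSRaux.core hq2 hfrob N ((i : Fin ℓ) × t i)
      (fun x => a x.1) (fun x => (x.2 : K)) g
      (fun x => ha x.1)
      (fun x => (htind x.1).ne_zero x.2)
      ?_ ?_ ?_ ?_
    · -- pairwise non-conjugacy
      intro x y hxy c hc heq
      have hne : x.1 ≠ y.1 := fun h => hxy (show a x.1 = a y.1 by rw [h])
      exact hconj x.1 y.1 hne ⟨c, hc, heq⟩
    · -- per-class Fq-independence
      intro lam hlam x₀ hsum0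
      -- fibers of the class map are blocks
      have hfib : (Finset.univ.filter (fun x : ((i : Fin ℓ) × t i) => a x.1 = a x₀.1))
          = Finset.univ.filter (fun x => x.1 = x₀.1) := by
        apply Finset.filter_congr
        intro x _
        simp [hainj.eq_iff]
      rw [hfib] at hsum0
      -- rewrite the sum as a sum over t x₀.1
      have hsum1 : ∑ y : t x₀.1, lam ⟨x₀.1, y⟩ * (y : K) = 0 := by
        rw [← hsum0, Finset.sum_filter, ← Finset.univ_sigma_univ, Finset.sum_sigma]
        rw [Finset.sum_eq_single x₀.1]
        · simp
        · intro i _ hi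
          apply Finset.sum_eq_zero
          intro y _
          rw [if_neg hi]
        · intro h
          exact absurd (Finset.mem_univ x₀.1) h
      -- coefficients come from Fq
      have hlamFq : ∀ y : t x₀.1, ∃ l : Fq, algebraMap Fq K l = lam ⟨x₀.1, y⟩ :=
        fun y => RSRaux.fixed_mem hq2 hcardFq _ (hlam ⟨x₀.1, y⟩)
      choose lFq hlFq using hlamFq
      have hzero : ∀ y : t x₀.1, lFq y = 0 := by
        apply Fintype.linearIndependent_iff.mp (htind x₀.1) lFq
        have : ∑ y : t x₀.1, lFq y • (y : K) = 0 := by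
          rw [← hsum1]
          apply Finset.sum_congr rfl
          intro y _
          rw [Algebra.smul_def, hlFq y]
        exact this
      have := hlFq x₀.2
      rw [hzero x₀.2, map_zero] at this
      rw [← this]
    · -- cardinality
      rw [Fintype.card_sigma, hN]
      apply Finset.sum_le_sum
      intro i _
      have h1 : Fintype.card (t i) ≤ Fintype.card (Set.range (β i)) :=
        Fintype.card_le_of_injective (Set.inclusion (htsub i)) (Set.inclusion_injective _)
      have h2 : Fintype.card (Set.range (β i)) ≤ Fintype.card (Fin (η i)) :=
        Fintype.card_range_le (β i)
      rw [Fintype.card_fin] at h2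
      omega
    · -- the vanishing sums
      intro u hu
      have := congrFun hg ⟨u, hu⟩
      rw [Finset.sum_apply] at this
      simpa [F, Φ] using this
  -- column description
  have hcol : ∀ (i : Fin ℓ) (j : Fin (η i)),
      (fun u : Fin N => V u ⟨i, j⟩) = (β i j)⁻¹ • (Φ i (β i j)) := by
    intro i j
    funext u
    rw [hV]
    have hdvd : (q - 1) ∣ (q ^ (u : ℕ) - 1) := by
      have := Nat.sub_dvd_pow_sub_pow q 1 (u : ℕ)
      simpa using this
    have h1 : (β i j ^ (q - 1)) ^ ((q ^ (u : ℕ) - 1) / (q - 1)) = β i j ^ (q ^ (u : ℕ) - 1) := by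
      rw [← pow_mul, Nat.mul_div_cancel' hdvd]
    have h2 : β i j ^ (q ^ (u : ℕ) - 1) = (β i j)⁻¹ * β i j ^ q ^ (u : ℕ) := by
      rw [pow_sub₀ _ (hβ i j) (Nat.one_le_pow _ _ (by omega))]
      rw [pow_one]
      ring
    simp only [Pi.smul_apply, smul_eq_mul]
    show (β i j ^ (q - 1) * a i) ^ ((q ^ (u : ℕ) - 1) / (q - 1))
      = (β i j)⁻¹ * RSRaux.Wnat q (a i) (β i j) (u : ℕ)
    rw [mul_pow, h1, h2, RSRaux.Wnat]
    ring
  -- per-block span identification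
  have hspan : ∀ i : Fin ℓ,
      Submodule.span K (Set.range fun j : Fin (η i) => fun u : Fin N => V u ⟨i, j⟩)
        = Submodule.span K (Set.range fun y : t i => F ⟨i, y⟩) := by
    intro i
    have e1 : (fun j : Fin (η i) => fun u : Fin N => V u ⟨i, j⟩)
        = fun j => (β i j)⁻¹ • (Φ i (β i j)) := by
      funext j
      exact hcol i j
    rw [e1, RSRaux.span_smul_eq (fun j => Φ i (β i j)) (fun j => (β i j)⁻¹)
      (fun j => inv_ne_zero (hβ i j))]
    have e2 : Set.range (fun j : Fin (η i) => Φ i (β i j)) = Φ i '' Set.range (β i) :=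
      (Set.range_comp _ _)
    have e3 : Set.range (fun y : t i => F ⟨i, y⟩) = Φ i '' (t i) := by
      rw [show (fun y : t i => F ⟨i, y⟩) = (Φ i) ∘ ((↑) : t i → K) from rfl,
        Set.range_comp, Subtype.range_coe]
    rw [e2, e3, RSRaux.span_image_eq (Φ i) (htspan i).symm]
  -- global column span
  have hVT : V.transpose = fun c : ((i : Fin ℓ) × Fin (η i)) => fun u : Fin N => V u c := rfl
  have hspanV : Submodule.span K (Set.range V.transpose) = Submodule.span K (Set.range F) := by
    calc Submodule.span K (Set.range V.transpose)
        = Submodule.span K (⋃ i, Set.range fun j : Fin (η i) => fun u : Fin N => V u ⟨i, j⟩) := by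
          rw [hVT, Set.range_sigma_eq_iUnion_range]
      _ = ⨆ i, Submodule.span K (Set.range fun j : Fin (η i) => fun u : Fin N => V u ⟨i, j⟩) :=
          Submodule.span_iUnion _
      _ = ⨆ i, Submodule.span K (Set.range fun y : t i => F ⟨i, y⟩) := iSup_congr hspan
      _ = Submodule.span K (⋃ i, Set.range fun y : t i => F ⟨i, y⟩) :=
          (Submodule.span_iUnion _).symm
      _ = Submodule.span K (Set.range F) := by rw [← Set.range_sigma_eq_iUnion_range]
  have hrankV : V.rank = Fintype.card ((i : Fin ℓ) × t i) := by
    rw [Matrix.rank_eq_finrank_span_cols, show Set.range V.col = Set.range V.transpose from rfl, hspanV, finrank_span_eq_card hFind]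
  have hrankVi : ∀ i : Fin ℓ,
      (V.submatrix id (fun j : Fin (η i) => (⟨i, j⟩ : (i : Fin ℓ) × Fin (η i)))).rank
        = Fintype.card (t i) := by
    intro i
    rw [Matrix.rank_eq_finrank_span_cols]
    have hsub : Set.range (V.submatrix id
          (fun j : Fin (η i) => (⟨i, j⟩ : (i : Fin ℓ) × Fin (η i)))).col
        = Set.range fun j : Fin (η i) => fun u : Fin N => V u ⟨i, j⟩ := rfl
    rw [hsub, hspan i]
    exact finrank_span_eq_card (hFind.comp (Sigma.mk i) sigma_mk_injective)
  rw [hrankV, Fintype.card_sigma]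
  apply Finset.sum_congr rfl
  intro i _
  exact (hrankVi i).symm
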